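/- The connective constant of the bridge graph $\mathbb{B}_\Delta$ equals $\sqrt{\Delta - 1}$, for every integer $\Delta \ge 2$. -/

import Mathlib

open Filter

/-- Edge multiplicities of the bridge multigraph `𝔹_Δ` on `ℤ`: each edge
`{2k, 2k+1}` of `ℤ` is replaced by `Δ - 1` parallel edges, while each edge
`{2k+1, 2k+2}` remains a single edge; non-neighbouring pairs get no edge. -/
def bridgeMult (Δ : ℕ) (u v : ℤ) : ℕ :=
  if v = u + 1 ∨ u = v + 1 then (if Even (min u v) then Δ - 1 else 1) else 0

/-- The number of `n`-step self-avoiding walks on the multigraph `𝔹_Δ` starting at `v`: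
a walk consists of a self-avoiding vertex sequence together with a choice of one of the
parallel edges for each step. -/
noncomputable def bridgeSawCount (Δ : ℕ) (v : ℤ) (n : ℕ) : ℕ :=
  Nat.card {pe : (Fin (n + 1) → ℤ) × (Fin n → ℕ) //
    pe.1 0 = v ∧ Function.Injective pe.1 ∧
    ∀ i : Fin n, pe.2 i < bridgeMult Δ (pe.1 i.castSucc) (pe.1 i.succ)}

/-- A self-avoiding nearest-neighbour path on `ℤ` moves monotonically. -/
lemma path_dichotomy (n : ℕ) (p : Fin (n+1) → ℤ) (inj : Function.Injective p)
    (h : ∀ i : Fin n, p i.succ = p i.castSucc + 1 ∨ p i.castSucc = p i.succ + 1) :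
    (∀ i : Fin (n+1), p i = p 0 + i.val) ∨ (∀ i : Fin (n+1), p i = p 0 - i.val) := by
  rcases n with _ | m
  · left
    intro i
    have : i = 0 := by omega
    simp [this]
  · -- steps
    set s : ℕ → ℤ := fun k => if hk : k < m + 1 then p (⟨k, by omega⟩ : Fin (m+1)).succ - p (⟨k, by omega⟩ : Fin (m+1)).castSucc else 0 with hs
    have hstep : ∀ k (hk : k < m + 1), s k = 1 ∨ s k = -1 := by
      intro k hk
      have h1 := h ⟨k, hk⟩
      simp only [Fin.succ_mk, Fin.castSucc_mk] at h1
      rcases h1 with h1 | h1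
      · left; simp [hs, hk, Fin.succ_mk, Fin.castSucc_mk, show k ≤ m by omega]; omega
      · right; simp [hs, hk, Fin.succ_mk, Fin.castSucc_mk, show k ≤ m by omega]; omega
    have hsame : ∀ k (hk : k < m + 1), s k = s 0 := by
      intro k
      induction k with
      | zero => intro; rfl
      | succ j ih =>
        intro hk
        have hj : j < m + 1 := by omega
        have hne : s (j+1) ≠ -(s j) := by
          intro hEq
          have h2 : p ⟨j+2, by omega⟩ = p ⟨j, by omega⟩ := by
            have e1 : s j = p ⟨j+1, by omega⟩ - p ⟨j, by omega⟩ := by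
              simp [hs, hj, Fin.succ_mk, Fin.castSucc_mk, show j ≤ m by omega]
            have e2 : s (j+1) = p ⟨j+2, by omega⟩ - p ⟨j+1, by omega⟩ := by
              simp [hs, hk, Fin.succ_mk, Fin.castSucc_mk, show j < m by omega]
            have hEq' := hEq
            rw [e1, e2] at hEq'
            have : p (⟨j+2, by omega⟩ : Fin (m+2)) = p ⟨j, by omega⟩ := by linarith
            exact this
          have := inj h2
          simp [Fin.ext_iff] at this
        have h0 := hstep 0 (by omega)
        have h1 := hstep j hj
        have h2 := hstep (j+1) hk
        have h3 := ih hj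
        omega
    have hval : ∀ k (hk : k < m + 2), p ⟨k, hk⟩ = p 0 + s 0 * k := by
      intro k
      induction k with
      | zero => intro _; simp only [Nat.cast_zero, mul_zero, add_zero]; congr 1
      | succ j ih =>
        intro hk
        have hj : j < m + 1 := by omega
        have e1 : p ⟨j+1, hk⟩ - p ⟨j, by omega⟩ = s j := by
          simp [hs, hj, Fin.succ_mk, Fin.castSucc_mk, show j ≤ m by omega]
        have := ih (by omega)
        rw [hsame j hj] at e1
        push_cast
        linarith
    rcases hstep 0 (by omega) with h0 | h0
    · left
      intro i
      have := hval i.val i.isLt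
      rw [h0] at this
      simpa using this
    · right
      intro i
      have := hval i.val i.isLt
      rw [h0] at this
      simp at this
      rw [this]; ring
/-- The number of walks is a sum over the two directions of products of multiplicities. -/
lemma count_eq (Δ n : ℕ) (hn : 1 ≤ n) (v : ℤ) :
    bridgeSawCount Δ v n =
      (∏ i : Fin n, bridgeMult Δ (v + i.val) (v + i.val + 1)) +
      (∏ i : Fin n, bridgeMult Δ (v - i.val) (v - i.val - 1)) := by
  classical
  set T := {pe : (Fin (n + 1) → ℤ) × (Fin n → ℕ) //
    pe.1 0 = v ∧ Function.Injective pe.1 ∧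
    ∀ i : Fin n, pe.2 i < bridgeMult Δ (pe.1 i.castSucc) (pe.1 i.succ)} with hT
  let pR : Fin (n+1) → ℤ := fun j => v + j.val
  let pL : Fin (n+1) → ℤ := fun j => v - j.val
  have injR : Function.Injective pR := by
    intro a b hab
    simp only [pR, add_right_inj, Nat.cast_inj] at hab
    exact Fin.ext hab
  have injL : Function.Injective pL := by
    intro a b hab
    simp only [pL, sub_right_inj, Nat.cast_inj] at hab
    exact Fin.ext hab
  let f : ((∀ i : Fin n, Fin (bridgeMult Δ (v + i.val) (v + i.val + 1))) ⊕
      (∀ i : Fin n, Fin (bridgeMult Δ (v - i.val) (v - i.val - 1)))) → T := fun x =>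
    match x with
    | Sum.inl g => ⟨(pR, fun i => (g i).val), by simp [pR], injR, by
        intro i
        have h' : pR i.castSucc = v + i.val ∧ pR i.succ = v + i.val + 1 := by
          constructor <;> simp [pR] <;> push_cast <;> ring
        show (g i).val < bridgeMult Δ (pR i.castSucc) (pR i.succ)
        rw [h'.1, h'.2]
        exact (g i).isLt⟩
    | Sum.inr g => ⟨(pL, fun i => (g i).val), by simp [pL], injL, by
        intro i
        have h' : pL i.castSucc = v - i.val ∧ pL i.succ = v - i.val - 1 := by
          constructor <;> simp [pL] <;> push_cast <;> ring
        show (g i).val < bridgeMult Δ (pL i.castSucc) (pL i.succ)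
        rw [h'.1, h'.2]
        exact (g i).isLt⟩
  have hbij : Function.Bijective f := by
    constructor
    · intro x y hxy
      have h1 := congrArg (fun z : T => z.val.1) hxy
      have h2 := congrArg (fun z : T => z.val.2) hxy
      match x, y with
      | Sum.inl g, Sum.inl g' =>
        simp only [f] at h2
        congr 1
        funext i
        exact Fin.ext (congrFun h2 i)
      | Sum.inr g, Sum.inr g' =>
        simp only [f] at h2
        congr 1
        funext i
        exact Fin.ext (congrFun h2 i)
      | Sum.inl g, Sum.inr g' =>
        exfalso
        simp only [f] at h1
        have := congrFun h1 ⟨1, by omega⟩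
        simp [pR, pL] at this
        omega
      | Sum.inr g, Sum.inl g' =>
        exfalso
        simp only [f] at h1
        have := congrFun h1 ⟨1, by omega⟩
        simp [pR, pL] at this
        omega
    · rintro ⟨⟨p, e⟩, h0, hinj, hlt⟩
      have h0' : p 0 = v := h0
      have hlt' : ∀ i : Fin n, e i < bridgeMult Δ (p i.castSucc) (p i.succ) := hlt
      have hadj : ∀ i : Fin n, p i.succ = p i.castSucc + 1 ∨ p i.castSucc = p i.succ + 1 := by
        intro i
        have := hlt' i
        by_contra hc
        push_neg at hc
        simp only [bridgeMult] at this
        rw [if_neg (by tauto)] at this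
        omega
      rcases path_dichotomy n p hinj hadj with hp | hp
      · refine ⟨Sum.inl (fun i => ⟨e i, ?_⟩), ?_⟩
        · have hc : p i.castSucc = v + i.val := by rw [hp i.castSucc, h0']; simp
          have hsc : p i.succ = v + i.val + 1 := by
            rw [hp i.succ, h0']; simp; push_cast; ring
          have h5 := hlt' i
          rwa [hc, hsc] at h5
        · apply Subtype.ext
          simp only [f]
          refine Prod.ext ?_ rfl
          funext j
          show pR j = p j
          rw [hp j, h0']
      · refine ⟨Sum.inr (fun i => ⟨e i, ?_⟩), ?_⟩
        · have hc : p i.castSucc = v - i.val := by rw [hp i.castSucc, h0']; simp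
          have hsc : p i.succ = v - i.val - 1 := by
            rw [hp i.succ, h0']; simp; push_cast; ring
          have h5 := hlt' i
          rwa [hc, hsc] at h5
        · apply Subtype.ext
          simp only [f]
          refine Prod.ext ?_ rfl
          funext j
          show pL j = p j
          rw [hp j, h0']
  have : bridgeSawCount Δ v n = Nat.card ((∀ i : Fin n, Fin (bridgeMult Δ (v + i.val) (v + i.val + 1))) ⊕
      (∀ i : Fin n, Fin (bridgeMult Δ (v - i.val) (v - i.val - 1)))) := by
    rw [bridgeSawCount, ← Nat.card_congr (Equiv.ofBijective f hbij)]
  rw [this]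
  simp [Nat.card_sum, Nat.card_pi]

/-- In a run of `n` consecutive integers, the alternating product lies between
`t^(n/2)` and `t^((n+1)/2)`. -/
lemma prod_parity_bound (t : ℕ) (ht : 1 ≤ t) (w : ℤ) :
    ∀ n : ℕ, t ^ (n / 2) ≤ (∏ i ∈ Finset.range n, (if Even (w + i) then t else 1)) ∧
      (∏ i ∈ Finset.range n, (if Even (w + i) then t else 1)) ≤ t ^ ((n + 1) / 2) := by
  intro n
  induction n using Nat.strong_induction_on with
  | _ n ih =>
    match n with
    | 0 => simp
    | 1 =>
      simp only [Finset.prod_range_one, Nat.cast_zero, add_zero]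
      constructor
      · split <;> simp [ht]
      · split <;> simp [ht]
    | (k+2) =>
      have hk := ih k (by omega)
      have hpair : (if Even (w + (k:ℤ)) then t else 1) * (if Even (w + (k:ℤ) + 1) then t else 1) = t := by
        by_cases he : Even (w + (k:ℤ))
        · rw [if_pos he, if_neg (by simp [Int.even_add_one, he])]
          simp
        · rw [if_neg he, if_pos (Int.even_add_one.mpr he)]
          simp
      have hprod : (∏ i ∈ Finset.range (k+2), (if Even (w + i) then t else 1)) =
          (∏ i ∈ Finset.range k, (if Even (w + i) then t else 1)) * t := by
        rw [Finset.prod_range_succ, Finset.prod_range_succ, mul_assoc]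
        congr 1
        push_cast
        rw [← add_assoc, hpair]
      rw [hprod]
      have e1 : (k + 2) / 2 = k / 2 + 1 := by omega
      have e2 : (k + 2 + 1) / 2 = (k + 1) / 2 + 1 := by omega
      rw [e1, e2, pow_succ, pow_succ]
      exact ⟨Nat.mul_le_mul_right t hk.1, Nat.mul_le_mul_right t hk.2⟩

lemma count_bounds (Δ : ℕ) (hΔ : 2 ≤ Δ) (v : ℤ) (n : ℕ) (hn : 1 ≤ n) :
    (Δ - 1) ^ (n / 2) ≤ bridgeSawCount Δ v n ∧
      bridgeSawCount Δ v n ≤ 2 * (Δ - 1) ^ ((n + 1) / 2) := by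
  have ht : 1 ≤ Δ - 1 := by omega
  have hA : (∏ i : Fin n, bridgeMult Δ (v + i.val) (v + i.val + 1)) =
      ∏ i ∈ Finset.range n, (if Even (v + i) then Δ - 1 else 1) := by
    rw [← Fin.prod_univ_eq_prod_range (fun i : ℕ => if Even (v + (i:ℤ)) then Δ - 1 else 1) n]
    apply Finset.prod_congr rfl
    intro i _
    rw [bridgeMult, if_pos (Or.inl rfl), min_eq_left (by linarith)]
  have hB : (∏ i : Fin n, bridgeMult Δ (v - i.val) (v - i.val - 1)) =
      ∏ i ∈ Finset.range n, (if Even ((v - 1) + i) then Δ - 1 else 1) := by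
    rw [← Fin.prod_univ_eq_prod_range (fun i : ℕ => if Even ((v - 1) + (i:ℤ)) then Δ - 1 else 1) n]
    apply Finset.prod_congr rfl
    intro i _
    rw [bridgeMult, if_pos (Or.inr (by ring)), min_eq_right (by linarith)]
    have hiff : Even (v - (i:ℤ) - 1) ↔ Even ((v - 1) + i) := by
      rw [show v - (i:ℤ) - 1 = (v - 1) - i from by ring, Int.even_sub, Int.even_add]
    rw [if_congr hiff rfl rfl]
  rcases prod_parity_bound (Δ - 1) ht v n with ⟨l1, _⟩
  rcases prod_parity_bound (Δ - 1) ht (v - 1) n with ⟨_, u2⟩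
  rcases prod_parity_bound (Δ - 1) ht v n with ⟨_, u1⟩
  rw [count_eq Δ n hn v, hA, hB]
  constructor
  · exact le_trans l1 (Nat.le_add_right _ _)
  · omega

lemma exp_tendsto_half (k : ℕ → ℕ)
    (hlow : ∀ n : ℕ, (n:ℝ)/2 - 1 ≤ (k n : ℝ)) (hupp : ∀ n : ℕ, (k n : ℝ) ≤ (n:ℝ)/2 + 1) :
    Tendsto (fun n : ℕ => (k n : ℝ) * ((1:ℝ)/n)) atTop (nhds (1/2)) := by
  have h1 : Tendsto (fun n : ℕ => (1:ℝ)/2 - 1/n) atTop (nhds (1/2)) := by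
    have := tendsto_one_div_atTop_nhds_zero_nat (𝕜 := ℝ)
    simpa using (tendsto_const_nhds (x := (1:ℝ)/2)).sub this
  have h2 : Tendsto (fun n : ℕ => (1:ℝ)/2 + 1/n) atTop (nhds (1/2)) := by
    have := tendsto_one_div_atTop_nhds_zero_nat (𝕜 := ℝ)
    simpa using (tendsto_const_nhds (x := (1:ℝ)/2)).add this
  apply tendsto_of_tendsto_of_tendsto_of_le_of_le' h1 h2
  · filter_upwards [eventually_ge_atTop 1] with n hn
    have hn' : (0:ℝ) < n := by exact_mod_cast hn
    have e : (k n : ℝ) * ((1:ℝ)/n) = (k n : ℝ)/n := by ring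
    have e2 : (1:ℝ)/2 - 1/n = ((n:ℝ)/2 - 1)/n := by field_simp
    rw [e, e2]
    exact (div_le_div_iff_of_pos_right hn').mpr (hlow n)
  · filter_upwards [eventually_ge_atTop 1] with n hn
    have hn' : (0:ℝ) < n := by exact_mod_cast hn
    have e : (k n : ℝ) * ((1:ℝ)/n) = (k n : ℝ)/n := by ring
    have e2 : (1:ℝ)/2 + 1/n = ((n:ℝ)/2 + 1)/n := by field_simp
    rw [e, e2]
    exact (div_le_div_iff_of_pos_right hn').mpr (hupp n)

lemma rpow_tendsto (c : ℝ) (hc : 1 ≤ c) (k : ℕ → ℕ)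
    (hlow : ∀ n : ℕ, (n:ℝ)/2 - 1 ≤ (k n : ℝ)) (hupp : ∀ n : ℕ, (k n : ℝ) ≤ (n:ℝ)/2 + 1) :
    Tendsto (fun n : ℕ => (c ^ k n) ^ ((1:ℝ)/n)) atTop (nhds (Real.sqrt c)) := by
  have hc0 : (0:ℝ) < c := lt_of_lt_of_le zero_lt_one hc
  have heq : ∀ n : ℕ, (c ^ k n) ^ ((1:ℝ)/n) = c ^ ((k n : ℝ) * ((1:ℝ)/n)) := by
    intro n
    rw [← Real.rpow_natCast c (k n), ← Real.rpow_mul hc0.le]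
  simp only [heq]
  have hx := exp_tendsto_half k hlow hupp
  have := Tendsto.rpow (tendsto_const_nhds (x := c)) hx (Or.inl hc0.ne')
  rw [Real.sqrt_eq_rpow]; exact this

/-- The connective constant of the bridge graph `𝔹_Δ` equals `√(Δ-1)`. -/
theorem bridge_graph_connective_constant (Δ : ℕ) (hΔ : 2 ≤ Δ) (v : ℤ) :
    Tendsto (fun n : ℕ => (bridgeSawCount Δ v n : ℝ) ^ ((1 : ℝ) / n)) atTop
      (nhds (Real.sqrt ((Δ : ℝ) - 1))) := by
  have ht : 1 ≤ Δ - 1 := by omega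
  have htR : ((Δ - 1 : ℕ) : ℝ) = (Δ : ℝ) - 1 := by
    rw [Nat.cast_sub (by omega)]; simp
  rw [← htR]
  have hc1 : (1:ℝ) ≤ ((Δ - 1 : ℕ) : ℝ) := by exact_mod_cast ht
  have hlowT : Tendsto (fun n : ℕ => (((Δ - 1 : ℕ) : ℝ) ^ (n / 2)) ^ ((1:ℝ)/n)) atTop
      (nhds (Real.sqrt ((Δ - 1 : ℕ) : ℝ))) := by
    apply rpow_tendsto _ hc1
    · intro n
      have h : n ≤ 2 * (n / 2) + 1 := by omega
      have : (n:ℝ) ≤ 2 * ((n / 2 : ℕ) : ℝ) + 1 := by exact_mod_cast h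
      linarith
    · intro n
      have h : 2 * (n / 2) ≤ n := by omega
      have : 2 * ((n / 2 : ℕ) : ℝ) ≤ (n:ℝ) := by exact_mod_cast h
      linarith
  have hupT : Tendsto (fun n : ℕ => ((2:ℝ) * ((Δ - 1 : ℕ) : ℝ) ^ ((n + 1) / 2)) ^ ((1:ℝ)/n)) atTop
      (nhds (Real.sqrt ((Δ - 1 : ℕ) : ℝ))) := by
    have h2 : Tendsto (fun n : ℕ => (2:ℝ) ^ ((1:ℝ)/n)) atTop (nhds 1) := by
      have hx : Tendsto (fun n : ℕ => (1:ℝ)/n) atTop (nhds 0) := tendsto_one_div_atTop_nhds_zero_nat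
      have := Tendsto.rpow (tendsto_const_nhds (x := (2:ℝ))) hx (Or.inl two_ne_zero)
      simpa using this
    have hT : Tendsto (fun n : ℕ => (((Δ - 1 : ℕ) : ℝ) ^ ((n + 1) / 2)) ^ ((1:ℝ)/n)) atTop
        (nhds (Real.sqrt ((Δ - 1 : ℕ) : ℝ))) := by
      apply rpow_tendsto _ hc1
      · intro n
        have h : n ≤ 2 * ((n + 1) / 2) := by omega
        have : (n:ℝ) ≤ 2 * (((n + 1) / 2 : ℕ) : ℝ) := by exact_mod_cast h
        linarith
      · intro n
        have h : 2 * ((n + 1) / 2) ≤ n + 1 := by omega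
        have : 2 * (((n + 1) / 2 : ℕ) : ℝ) ≤ (n:ℝ) + 1 := by exact_mod_cast h
        linarith
    have hmul := h2.mul hT
    rw [one_mul] at hmul
    apply hmul.congr
    intro n
    rw [← Real.mul_rpow (by norm_num) (by positivity)]
  apply tendsto_of_tendsto_of_tendsto_of_le_of_le' hlowT hupT
  · filter_upwards [eventually_ge_atTop 1] with n hn
    have hb := (count_bounds Δ hΔ v n hn).1
    have hcast : (((Δ - 1 : ℕ) : ℝ) ^ (n / 2)) ≤ (bridgeSawCount Δ v n : ℝ) := by
      exact_mod_cast hb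
    exact Real.rpow_le_rpow (by positivity) hcast (by positivity)
  · filter_upwards [eventually_ge_atTop 1] with n hn
    have hb := (count_bounds Δ hΔ v n hn).2
    have hcast : (bridgeSawCount Δ v n : ℝ) ≤ (2:ℝ) * ((Δ - 1 : ℕ) : ℝ) ^ ((n + 1) / 2) := by
      exact_mod_cast hb
    exact Real.rpow_le_rpow (by positivity) hcast (by positivity)
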